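/- Let k be a field, V = k^n, and fix the data (W_{x,i}), P_x, L_x, ℛ, G_P as in the context, for g, m ≥ 0. Define Φ : ℛ → Hom(Γ_{g,m}, GL(V)) by Φ(φ)(a_i) = A_i, Φ(φ)(b_i) = B_i, Φ(φ)(c_x) = C_{x,2}·C_{x,1}. Then: (a) Φ is well defined (the images of the generators satisfy the defining relation of Γ_{g,m}); (b) the image of Φ is exactly the set of homomorphisms ρ : Γ_{g,m} → GL(V) such that for every x ∈ {1,…,m}, ρ(c_x) is conjugate in GL(V) to an element of P_x; (c) Φ is equivariant: if φ' = (g_0,(l_x))·φ for (g_0,(l_x)) ∈ G_P, then Φ(φ') = g_0 · Φ(φ) · g_0⁻¹ (conjugation of the representation by g_0). -/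

import Mathlib

/-- Generators of the fundamental group of a genus-`g` surface with `m` punctures. -/
abbrev SurfaceGen (g m : ℕ) := (Fin g ⊕ Fin g) ⊕ Fin m

/-- The single relator `(∏ i, aᵢ bᵢ aᵢ⁻¹ bᵢ⁻¹) · c₁ ⋯ c_m`. -/
def surfaceRelator (g m : ℕ) : FreeGroup (SurfaceGen g m) :=
  (List.ofFn fun i : Fin g =>
      FreeGroup.of (Sum.inl (Sum.inl i)) * FreeGroup.of (Sum.inl (Sum.inr i)) *
        (FreeGroup.of (Sum.inl (Sum.inl i)))⁻¹ * (FreeGroup.of (Sum.inl (Sum.inr i)))⁻¹).prod *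
    (List.ofFn fun x : Fin m => FreeGroup.of (Sum.inr x)).prod

/-- The fundamental group `Γ_{g,m}` of a compact genus-`g` surface with `m` punctures. -/
abbrev SurfaceGroup (g m : ℕ) :=
  PresentedGroup ({surfaceRelator g m} : Set (FreeGroup (SurfaceGen g m)))

/-- The generator `aᵢ`. -/
def genA {g m : ℕ} (i : Fin g) : SurfaceGroup g m := PresentedGroup.of (Sum.inl (Sum.inl i))

/-- The generator `bᵢ`. -/
def genB {g m : ℕ} (i : Fin g) : SurfaceGroup g m := PresentedGroup.of (Sum.inl (Sum.inr i))

/-- The generator `cₓ`. -/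
def genC {g m : ℕ} (x : Fin m) : SurfaceGroup g m := PresentedGroup.of (Sum.inr x)

/-- The flag `F_j := W_j ⊕ ⋯ ⊕ W_N` associated with a decomposition `V = W_1 ⊕ ⋯ ⊕ W_N`. -/
def flagOf {k V : Type} [Field k] [AddCommGroup V] [Module k V] {N : ℕ}
    (W : Fin N → Submodule k V) (j : Fin N) : Submodule k V :=
  ⨆ i, ⨆ _ : j ≤ i, W i

/-- The parabolic subgroup `P = {g ∈ GL(V) : g F_j = F_j for all j}` of the flag of `W`. -/
def parabOf {k V : Type} [Field k] [AddCommGroup V] [Module k V] {N : ℕ}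
    (W : Fin N → Submodule k V) : Set (Module.End k V)ˣ :=
  {u | ∀ j, Submodule.map (u : Module.End k V) (flagOf W j) = flagOf W j}

/-- The Levi subgroup `L = {g ∈ GL(V) : g Wᵢ = Wᵢ for all i}` of a decomposition `W`. -/
def leviOf {k V : Type} [Field k] [AddCommGroup V] [Module k V] {N : ℕ}
    (W : Fin N → Submodule k V) : Set (Module.End k V)ˣ :=
  {u | ∀ i, Submodule.map (u : Module.End k V) (W i) = W i}


section Aux

variable {g m : ℕ} {G : Type*} [Group G]

theorem lift_surfaceRelator (f : SurfaceGen g m → G) :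
    FreeGroup.lift f (surfaceRelator g m) =
      (List.ofFn fun i : Fin g => f (.inl (.inl i)) * f (.inl (.inr i)) *
        (f (.inl (.inl i)))⁻¹ * (f (.inl (.inr i)))⁻¹).prod *
      (List.ofFn fun x : Fin m => f (.inr x)).prod := by
  simp [surfaceRelator, map_list_prod, List.map_ofFn, Function.comp_def]

theorem surface_rel (ρ : SurfaceGroup g m →* G) :
    (List.ofFn fun i : Fin g =>
        ρ (genA i) * ρ (genB i) * (ρ (genA i))⁻¹ * (ρ (genB i))⁻¹).prod *
      (List.ofFn fun x : Fin m => ρ (genC x)).prod = 1 := by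
  have h1 : PresentedGroup.mk _ (surfaceRelator g m) = (1 : SurfaceGroup g m) :=
    (QuotientGroup.eq_one_iff _).mpr (Subgroup.subset_normalClosure rfl)
  have h2 : ρ (PresentedGroup.mk _ (surfaceRelator g m)) =
      FreeGroup.lift (fun a => ρ (PresentedGroup.of a)) (surfaceRelator g m) :=
    FreeGroup.lift_unique (ρ.comp (PresentedGroup.mk _)) (fun x => rfl)
  rw [h1, map_one] at h2
  rw [lift_surfaceRelator] at h2
  exact h2.symm

end Aux

section Par

variable {k V : Type} [Field k] [AddCommGroup V] [Module k V] {N : ℕ}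
  (W : Fin N → Submodule k V)

theorem one_mem_leviOf : (1 : (Module.End k V)ˣ) ∈ leviOf W := by
  intro i
  show Submodule.map ((1 : (Module.End k V)ˣ) : Module.End k V) (W i) = W i
  rw [Units.val_one, Module.End.one_eq_id, Submodule.map_id]

theorem leviOf_subset_parabOf {u : (Module.End k V)ˣ} (hu : u ∈ leviOf W) :
    u ∈ parabOf W := by
  intro j
  rw [flagOf, Submodule.map_iSup]
  refine iSup_congr fun i => ?_
  rw [Submodule.map_iSup]
  exact iSup_congr fun h => hu i

theorem mul_mem_parabOf {u v : (Module.End k V)ˣ} (hu : u ∈ parabOf W)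
    (hv : v ∈ parabOf W) : u * v ∈ parabOf W := by
  intro j
  have : ((u * v : (Module.End k V)ˣ) : Module.End k V) =
      (u : Module.End k V) ∘ₗ (v : Module.End k V) := rfl
  rw [this, Submodule.map_comp, hv j, hu j]

end Par

/-- The map `Φ : ℛ → Hom(Γ_{g,m}, GL(V))`, `Φ(φ)(aᵢ) = Aᵢ`, `Φ(φ)(bᵢ) = Bᵢ`,
`Φ(φ)(cₓ) = C_{x,2}·C_{x,1}`: (a) it is well defined (the prescribed images of the
generators satisfy the surface relation, so a homomorphism with these values on the
generators exists); (b) its image is exactly the set of homomorphisms `ρ` such that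
each `ρ(cₓ)` is conjugate to an element of `P_x`; (c) it is `G_P`-equivariant. -/
theorem stmt2 (k : Type) [Field k] (V : Type) [AddCommGroup V] [Module k V]
    [FiniteDimensional k V] (n g m : ℕ) (hdim : Module.finrank k V = n)
    (nx : Fin m → ℕ)
    (W : (x : Fin m) → Fin (nx x) → Submodule k V)
    (hindep : ∀ x, iSupIndep (W x)) (hsup : ∀ x, (⨆ i, W x i) = ⊤) :
    -- (a) well-definedness of `Φ` on `ℛ`
    (∀ (A B : Fin g → (Module.End k V)ˣ) (C1 C2 : Fin m → (Module.End k V)ˣ),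
      (List.ofFn fun i => A i * B i * (A i)⁻¹ * (B i)⁻¹).prod *
          (List.ofFn fun x => C2 x * C1 x).prod = 1 →
      (∀ x, ∃ gx : (Module.End k V)ˣ,
        C1 x * gx⁻¹ ∈ leviOf (W x) ∧ gx * C2 x ∈ parabOf (W x)) →
      ∃ ρ : SurfaceGroup g m →* (Module.End k V)ˣ,
        (∀ i, ρ (genA i) = A i) ∧ (∀ i, ρ (genB i) = B i) ∧
          (∀ x, ρ (genC x) = C2 x * C1 x)) ∧
    -- (b) the image of `Φ`
    (∀ ρ : SurfaceGroup g m →* (Module.End k V)ˣ,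
      (∃ (A B : Fin g → (Module.End k V)ˣ) (C1 C2 : Fin m → (Module.End k V)ˣ),
          (List.ofFn fun i => A i * B i * (A i)⁻¹ * (B i)⁻¹).prod *
              (List.ofFn fun x => C2 x * C1 x).prod = 1 ∧
          (∀ x, ∃ gx : (Module.End k V)ˣ,
            C1 x * gx⁻¹ ∈ leviOf (W x) ∧ gx * C2 x ∈ parabOf (W x)) ∧
          (∀ i, ρ (genA i) = A i) ∧ (∀ i, ρ (genB i) = B i) ∧
          (∀ x, ρ (genC x) = C2 x * C1 x)) ↔
        (∀ x, ∃ u p : (Module.End k V)ˣ, p ∈ parabOf (W x) ∧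
          ρ (genC x) = u * p * u⁻¹)) ∧
    -- (c) `G_P`-equivariance of `Φ`
    (∀ (A B : Fin g → (Module.End k V)ˣ) (C1 C2 : Fin m → (Module.End k V)ˣ)
        (g0 : (Module.End k V)ˣ) (l : Fin m → (Module.End k V)ˣ),
      (∀ x, l x ∈ leviOf (W x)) →
      ∀ ρ ρ' : SurfaceGroup g m →* (Module.End k V)ˣ,
        ((∀ i, ρ (genA i) = A i) ∧ (∀ i, ρ (genB i) = B i) ∧
          (∀ x, ρ (genC x) = C2 x * C1 x)) →
        ((∀ i, ρ' (genA i) = g0 * A i * g0⁻¹) ∧ (∀ i, ρ' (genB i) = g0 * B i * g0⁻¹) ∧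
          (∀ x, ρ' (genC x) = (g0 * C2 x * (l x)⁻¹) * (l x * C1 x * g0⁻¹))) →
        ∀ γ, ρ' γ = g0 * ρ γ * g0⁻¹) := by
  refine ⟨?_, ?_, ?_⟩
  · -- (a) well-definedness
    intro A B C1 C2 hrel _hpar
    have hrels : ∀ r ∈ ({surfaceRelator g m} : Set (FreeGroup (SurfaceGen g m))),
        FreeGroup.lift (fun a : SurfaceGen g m =>
          match a with
          | .inl (.inl i) => A i
          | .inl (.inr i) => B i
          | .inr x => C2 x * C1 x) r = 1 := by
      intro r hr
      rw [Set.mem_singleton_iff] at hr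
      subst hr
      rw [lift_surfaceRelator]
      exact hrel
    exact ⟨PresentedGroup.toGroup hrels, fun i => PresentedGroup.toGroup.of hrels,
      fun i => PresentedGroup.toGroup.of hrels, fun x => PresentedGroup.toGroup.of hrels⟩
  · -- (b) image of Φ
    intro ρ
    constructor
    · rintro ⟨A, B, C1, C2, hrel, hpar, hA, hB, hC⟩ x
      obtain ⟨gx, hgl, hgp⟩ := hpar x
      refine ⟨gx⁻¹, (gx * C2 x) * (C1 x * gx⁻¹),
        mul_mem_parabOf _ hgp (leviOf_subset_parabOf _ hgl), ?_⟩
      rw [hC x]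
      group
    · intro h
      choose u p hp hu using h
      refine ⟨fun i => ρ (genA i), fun i => ρ (genB i), fun x => (u x)⁻¹,
        fun x => ρ (genC x) * u x, ?_, ?_, fun i => rfl, fun i => rfl, fun x => by group⟩
      · simp only [mul_inv_cancel_right]
        exact surface_rel ρ
      · intro x
        refine ⟨(u x)⁻¹, ?_, ?_⟩
        · have h1 : (u x)⁻¹ * ((u x)⁻¹)⁻¹ = 1 := by group
          rw [h1]
          exact one_mem_leviOf _
        · have h2 : (u x)⁻¹ * (ρ (genC x) * u x) = p x := by
            rw [hu x]; group
          rw [h2]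
          exact hp x
  · -- (c) equivariance
    rintro A B C1 C2 g0 l _hl ρ ρ' ⟨hA, hB, hC⟩ ⟨hA', hB', hC'⟩
    have key : ρ' = (MulAut.conj g0).toMonoidHom.comp ρ := by
      apply PresentedGroup.ext
      rintro ((i | i) | x)
      · show ρ' (genA i) = (MulAut.conj g0).toMonoidHom.comp ρ (genA i)
        simp [MulAut.conj_apply, hA i, hA' i]
      · show ρ' (genB i) = (MulAut.conj g0).toMonoidHom.comp ρ (genB i)
        simp [MulAut.conj_apply, hB i, hB' i]
      · show ρ' (genC x) = (MulAut.conj g0).toMonoidHom.comp ρ (genC x)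
        simp only [MonoidHom.comp_apply, MulEquiv.coe_toMonoidHom, MulAut.conj_apply,
          hC x, hC' x]
        group
    intro γ
    rw [key]
    simp [MulAut.conj_apply]
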